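/- Let s₃ ≈ 1.755 be the unique root in the interval (1,2) of s³ − 2s² + s − 1 = 0, and let s₄ ≈ 1.907 be the unique root in the interval (1,2) of s⁴ − 2s³ + 2s² − 4s + 1 = 0. Fix a real s with s₃ ≤ s ≤ s₄ and consider the instance of the favorite-machine scheduling game on two machines with parameter s consisting of four jobs: A of size s/((s − 1)(s² + 1)) with favorite machine 2; B of size s/(s² + 1) with favorite machine 1; C of size (s² − s + 1)/(s² + 1) with favorite machine 1; and E of size 1/(s² + 1) with favorite machine 2. Then the allocation assigning A and C to machine 1 and B and E to machine 2 is a strong equilibrium whose makespan equals (s³ − s² + 2s − 1)/(s³ − s² + s − 1), while the optimal makespan of this instance is at most 1. Consequently, the strong price of anarchy at parameter s is at least (s³ − s² + 2s − 1)/(s³ − s² + s − 1). -/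

import Mathlib

open Finset

/-- Processing time of job `j` on machine `i` in the favorite-machine model:
`q j` on the favorite machine `f j` and `s * q j` on the other machine. -/
noncomputable def ptime (s : ℝ) {n : ℕ} (q : Fin n → ℝ) (f : Fin n → Fin 2)
    (i : Fin 2) (j : Fin n) : ℝ :=
  if f j = i then q j else s * q j

/-- Load of machine `i` under allocation `x`. -/
noncomputable def load (s : ℝ) {n : ℕ} (q : Fin n → ℝ) (f : Fin n → Fin 2)
    (x : Fin n → Fin 2) (i : Fin 2) : ℝ :=
  ∑ j ∈ Finset.univ.filter (fun j => x j = i), ptime s q f i j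

/-- Makespan (maximum load) of allocation `x`. -/
noncomputable def makespan (s : ℝ) {n : ℕ} (q : Fin n → ℝ) (f : Fin n → Fin 2)
    (x : Fin n → Fin 2) : ℝ :=
  max (load s q f x 0) (load s q f x 1)

/-- The optimal (minimum) makespan over all allocations. -/
noncomputable def optMakespan (s : ℝ) {n : ℕ} (q : Fin n → ℝ) (f : Fin n → Fin 2) : ℝ :=
  ⨅ y : Fin n → Fin 2, makespan s q f y

/-- Pure Nash equilibrium: no job can move to the other machine and find there
a load smaller than its current cost. -/
def IsNE (s : ℝ) {n : ℕ} (q : Fin n → ℝ) (f : Fin n → Fin 2)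
    (x : Fin n → Fin 2) : Prop :=
  ∀ j : Fin n, ∀ i : Fin 2, i ≠ x j →
    load s q f x (x j) ≤ load s q f (Function.update x j i) i

/-- Strong equilibrium: for every deviation `y` differing from `x` on a nonempty
set of jobs, some deviating job does not improve its cost. -/
def IsSE (s : ℝ) {n : ℕ} (q : Fin n → ℝ) (f : Fin n → Fin 2)
    (x : Fin n → Fin 2) : Prop :=
  ∀ y : Fin n → Fin 2, (∃ j, y j ≠ x j) →
    ∃ j, y j ≠ x j ∧ load s q f x (x j) ≤ load s q f y (y j)

set_option maxHeartbeats 4000000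

section keys
variable {s : ℝ}

lemma keyP1 {s₃ : ℝ} (hs₃lo : 1 < s₃) (hroot : s₃^3 - 2*s₃^2 + s₃ - 1 = 0) (hs : s₃ ≤ s) :
    (0:ℝ) ≤ s^3 - 2*s^2 + s - 1 := by
  nlinarith [mul_nonneg (sub_nonneg.2 hs) (sq_nonneg (s - 1)),
    mul_nonneg (sub_nonneg.2 hs) (sq_nonneg (s₃ - 1)),
    mul_nonneg (sub_nonneg.2 hs) (by nlinarith : (0:ℝ) ≤ s * s₃ - 1)]

variable (hs1 : 1 < s) (hs2 : s < 2) (P1 : (0:ℝ) ≤ s^3 - 2*s^2 + s - 1)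
include hs1

lemma k0000 : (s - 1)*(s^2 + 1) ≤ s^3 + s^2 - 1 := by nlinarith
lemma k0001 : (s - 1)*(s^2 + 1) ≤ s^3 + s - 1 := by nlinarith
lemma k0010 (hs2 : s < 2) : (s - 1)*(s^2 + 1) ≤ 3*s^2 - 2*s := by
  nlinarith [mul_nonneg (mul_self_nonneg s) (by linarith : (0:ℝ) ≤ 2 - s), sq_nonneg (s-1)]
lemma k0011 (hs2 : s < 2) : (s - 1)*(s^2 + 1) ≤ 2*s^2 - s := by
  nlinarith [mul_nonneg (mul_self_nonneg s) (by linarith : (0:ℝ) ≤ 2 - s), sq_nonneg (s-1)]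
lemma k0111 (P1 : (0:ℝ) ≤ s^3 - 2*s^2 + s - 1) :
    s^3 - s^2 + 2*s - 1 ≤ s^4 - s^3 + s^2 - 1 := by
  nlinarith [mul_nonneg (by linarith : (0:ℝ) ≤ s) P1]
lemma k1000 : (s - 1)*(s^2 + 1) ≤ s^3 - 1 := by nlinarith
lemma k1010 (P1 : (0:ℝ) ≤ s^3 - 2*s^2 + s - 1) :
    s^3 - s^2 + 2*s - 1 ≤ s^4 - 2*s^3 + 2*s^2 := by
  nlinarith [mul_nonneg (by linarith : (0:ℝ) ≤ s - 1) P1]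
lemma k1011 (P1 : (0:ℝ) ≤ s^3 - 2*s^2 + s - 1) :
    s^3 - s^2 + 2*s - 1 ≤ s^4 - 2*s^3 + 2*s^2 + s - 1 := by
  nlinarith [mul_nonneg (mul_nonneg (by linarith : (0:ℝ) ≤ s) (sq_nonneg (s - 1)))
    (by linarith : (0:ℝ) ≤ s - 1)]
lemma k1110 : s^3 - s^2 + 2*s - 1 ≤ s^4 - s^3 + s^2 := by
  nlinarith [sq_nonneg (s^2 - s), sq_nonneg (s - 1)]
lemma k1111 : s^3 - s^2 + 2*s - 1 ≤ s^4 - s^3 + s^2 + s - 1 := by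
  nlinarith [sq_nonneg (s^2 - s), sq_nonneg (s - 1)]
lemma kopt (P1 : (0:ℝ) ≤ s^3 - 2*s^2 + s - 1) : 2*s - 1 ≤ (s - 1)*(s^2 + 1) := by
  nlinarith [sq_nonneg (s - 1)]
lemma kmak : (s - 1)*(s^2 + 1) ≤ s^3 - s^2 + 2*s - 1 := by nlinarith

end keys

lemma fin2cases (i : Fin 2) : i = 0 ∨ i = 1 := by omega

lemma load_eq (s : ℝ) (q : Fin 4 → ℝ) (f : Fin 4 → Fin 2) (y : Fin 4 → Fin 2) (i : Fin 2) :
    load s q f y i =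
      (if y 0 = i then ptime s q f i 0 else 0) + (if y 1 = i then ptime s q f i 1 else 0)
      + (if y 2 = i then ptime s q f i 2 else 0) + (if y 3 = i then ptime s q f i 3 else 0) := by
  rw [load, Finset.sum_filter, Fin.sum_univ_four]

theorem spoa_lower_interval4
    (s₃ : ℝ) (hs₃lo : 1 < s₃) (hs₃hi : s₃ < 2)
    (hs₃root : s₃^3 - 2*s₃^2 + s₃ - 1 = 0)
    (s₄ : ℝ) (hs₄lo : 1 < s₄) (hs₄hi : s₄ < 2)
    (hs₄root : s₄^4 - 2*s₄^3 + 2*s₄^2 - 4*s₄ + 1 = 0)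
    (s : ℝ) (hs : s₃ ≤ s) (hs' : s ≤ s₄)
    (q : Fin 4 → ℝ) (hq : q = ![s/((s - 1)*(s^2 + 1)), s/(s^2 + 1), (s^2 - s + 1)/(s^2 + 1), 1/(s^2 + 1)])
    (f : Fin 4 → Fin 2) (hf : f = ![1, 0, 0, 1])
    (x : Fin 4 → Fin 2) (hx : x = ![0, 1, 0, 1]) :
    IsSE s q f x ∧
      makespan s q f x = (s^3 - s^2 + 2*s - 1)/(s^3 - s^2 + s - 1) ∧
      optMakespan s q f ≤ 1 ∧
      ((s^3 - s^2 + 2*s - 1)/(s^3 - s^2 + s - 1)) * optMakespan s q f ≤ makespan s q f x := by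
  subst hx
  have hs1 : 1 < s := lt_of_lt_of_le hs₃lo hs
  have hs2 : s < 2 := lt_of_le_of_lt hs' hs₄hi
  have hsm1 : (0:ℝ) < s - 1 := by linarith
  have h1n : s - 1 ≠ 0 := ne_of_gt hsm1
  have h2n : s^2 + 1 ≠ 0 := by positivity
  have hZ : (0:ℝ) < (s - 1) * (s^2 + 1) := by positivity
  have P1 : (0:ℝ) ≤ s^3 - 2*s^2 + s - 1 := keyP1 hs₃lo hs₃root hs
  -- load formulas
  have lx0 : load s q f ![0,1,0,1] 0 = (s^3 - s^2 + 2*s - 1)/((s - 1)*(s^2 + 1)) := by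
    rw [hq, hf, load_eq]; simp only [ptime, Matrix.cons_val]; norm_num; field_simp; ring
  have lx1 : load s q f ![0,1,0,1] 1 = 1 := by
    rw [hq, hf, load_eq]; simp only [ptime, Matrix.cons_val]; norm_num; field_simp
  have l0000 : load s q f ![0,0,0,0] 0 = (s^3 + s^2 - 1)/((s - 1)*(s^2 + 1)) := by
    rw [hq, hf, load_eq]; simp only [ptime, Matrix.cons_val]; norm_num; field_simp; ring
  have l0001 : load s q f ![0,0,0,1] 0 = (s^3 + s - 1)/((s - 1)*(s^2 + 1)) := by
    rw [hq, hf, load_eq]; simp only [ptime, Matrix.cons_val]; norm_num; field_simp; ring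
  have l0010 : load s q f ![0,0,1,0] 0 = (3*s^2 - 2*s)/((s - 1)*(s^2 + 1)) := by
    rw [hq, hf, load_eq]; simp only [ptime, Matrix.cons_val]; norm_num; field_simp; ring
  have l0011 : load s q f ![0,0,1,1] 0 = (2*s^2 - s)/((s - 1)*(s^2 + 1)) := by
    rw [hq, hf, load_eq]; simp only [ptime, Matrix.cons_val]; norm_num; field_simp; ring
  have l0100 : load s q f ![0,1,0,0] 0 = (s^3 + s - 1)/((s - 1)*(s^2 + 1)) := by
    rw [hq, hf, load_eq]; simp only [ptime, Matrix.cons_val]; norm_num; field_simp; ring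
  have l0110 : load s q f ![0,1,1,0] 0 = (2*s^2 - s)/((s - 1)*(s^2 + 1)) := by
    rw [hq, hf, load_eq]; simp only [ptime, Matrix.cons_val]; norm_num; field_simp; ring
  have l0111 : load s q f ![0,1,1,1] 1 = (s^4 - s^3 + s^2 - 1)/((s - 1)*(s^2 + 1)) := by
    rw [hq, hf, load_eq]; simp only [ptime, Matrix.cons_val]; norm_num; field_simp; ring
  have l1000 : load s q f ![1,0,0,0] 0 = (s^3 - 1)/((s - 1)*(s^2 + 1)) := by
    rw [hq, hf, load_eq]; simp only [ptime, Matrix.cons_val]; norm_num; field_simp; ring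
  have l1001 : load s q f ![1,0,0,1] 0 = 1 := by
    rw [hq, hf, load_eq]; simp only [ptime, Matrix.cons_val]; norm_num; field_simp; ring
  have l1001' : load s q f ![1,0,0,1] 1 = (2*s - 1)/((s - 1)*(s^2 + 1)) := by
    rw [hq, hf, load_eq]; simp only [ptime, Matrix.cons_val]; norm_num; field_simp; ring
  have l1010 : load s q f ![1,0,1,0] 1 = (s^4 - 2*s^3 + 2*s^2)/((s - 1)*(s^2 + 1)) := by
    rw [hq, hf, load_eq]; simp only [ptime, Matrix.cons_val]; norm_num; field_simp; ring
  have l1011 : load s q f ![1,0,1,1] 1 = (s^4 - 2*s^3 + 2*s^2 + s - 1)/((s - 1)*(s^2 + 1)) := by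
    rw [hq, hf, load_eq]; simp only [ptime, Matrix.cons_val]; norm_num; field_simp; ring
  have l1100 : load s q f ![1,1,0,0] 0 = 1 := by
    rw [hq, hf, load_eq]; simp only [ptime, Matrix.cons_val]; norm_num; field_simp; ring
  have l1101 : load s q f ![1,1,0,1] 1 = (s^3 - s^2 + 2*s - 1)/((s - 1)*(s^2 + 1)) := by
    rw [hq, hf, load_eq]; simp only [ptime, Matrix.cons_val]; norm_num; field_simp; ring
  have l1110 : load s q f ![1,1,1,0] 1 = (s^4 - s^3 + s^2)/((s - 1)*(s^2 + 1)) := by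
    rw [hq, hf, load_eq]; simp only [ptime, Matrix.cons_val]; norm_num; field_simp; ring
  have l1111 : load s q f ![1,1,1,1] 1 = (s^4 - s^3 + s^2 + s - 1)/((s - 1)*(s^2 + 1)) := by
    rw [hq, hf, load_eq]; simp only [ptime, Matrix.cons_val]; norm_num; field_simp; ring
  -- makespan of x
  have hmak : makespan s q f ![0,1,0,1] = (s^3 - s^2 + 2*s - 1)/(s^3 - s^2 + s - 1) := by
    rw [makespan, lx0, lx1, max_eq_left, show (s - 1)*(s^2 + 1) = s^3 - s^2 + s - 1 by ring]
    rw [le_div_iff₀ hZ]; linarith [kmak hs1]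
  -- the strong equilibrium property
  have hSE : IsSE s q f ![0,1,0,1] := by
    intro y hne
    rcases fin2cases (y 0) with h0|h0 <;> rcases fin2cases (y 1) with h1|h1 <;>
      rcases fin2cases (y 2) with h2|h2 <;> rcases fin2cases (y 3) with h3|h3
    · -- 0000
      have hy : y = ![0,0,0,0] := by funext j; fin_cases j <;> simpa using ‹_›
      subst hy
      refine ⟨1, by decide, ?_⟩
      rw [show ((![0,1,0,1] : Fin 4 → Fin 2) 1) = 1 from rfl,
        show ((![0,0,0,0] : Fin 4 → Fin 2) 1) = 0 from rfl, lx1, l0000, le_div_iff₀ hZ]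
      linarith [k0000 hs1]
    · -- 0001
      have hy : y = ![0,0,0,1] := by funext j; fin_cases j <;> simpa using ‹_›
      subst hy
      refine ⟨1, by decide, ?_⟩
      rw [show ((![0,1,0,1] : Fin 4 → Fin 2) 1) = 1 from rfl,
        show ((![0,0,0,1] : Fin 4 → Fin 2) 1) = 0 from rfl, lx1, l0001, le_div_iff₀ hZ]
      linarith [k0001 hs1]
    · -- 0010
      have hy : y = ![0,0,1,0] := by funext j; fin_cases j <;> simpa using ‹_›
      subst hy
      refine ⟨1, by decide, ?_⟩
      rw [show ((![0,1,0,1] : Fin 4 → Fin 2) 1) = 1 from rfl,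
        show ((![0,0,1,0] : Fin 4 → Fin 2) 1) = 0 from rfl, lx1, l0010, le_div_iff₀ hZ]
      linarith [k0010 hs1 hs2]
    · -- 0011
      have hy : y = ![0,0,1,1] := by funext j; fin_cases j <;> simpa using ‹_›
      subst hy
      refine ⟨1, by decide, ?_⟩
      rw [show ((![0,1,0,1] : Fin 4 → Fin 2) 1) = 1 from rfl,
        show ((![0,0,1,1] : Fin 4 → Fin 2) 1) = 0 from rfl, lx1, l0011, le_div_iff₀ hZ]
      linarith [k0011 hs1 hs2]
    · -- 0100
      have hy : y = ![0,1,0,0] := by funext j; fin_cases j <;> simpa using ‹_›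
      subst hy
      refine ⟨3, by decide, ?_⟩
      rw [show ((![0,1,0,1] : Fin 4 → Fin 2) 3) = 1 from rfl,
        show ((![0,1,0,0] : Fin 4 → Fin 2) 3) = 0 from rfl, lx1, l0100, le_div_iff₀ hZ]
      linarith [k0001 hs1]
    · -- 0101 = x : contradiction
      exfalso
      obtain ⟨j, hj⟩ := hne
      apply hj
      fin_cases j <;> simp [h0, h1, h2, h3]
    · -- 0110
      have hy : y = ![0,1,1,0] := by funext j; fin_cases j <;> simpa using ‹_›
      subst hy
      refine ⟨3, by decide, ?_⟩
      rw [show ((![0,1,0,1] : Fin 4 → Fin 2) 3) = 1 from rfl,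
        show ((![0,1,1,0] : Fin 4 → Fin 2) 3) = 0 from rfl, lx1, l0110, le_div_iff₀ hZ]
      linarith [k0011 hs1 hs2]
    · -- 0111
      have hy : y = ![0,1,1,1] := by funext j; fin_cases j <;> simpa using ‹_›
      subst hy
      refine ⟨2, by decide, ?_⟩
      rw [show ((![0,1,0,1] : Fin 4 → Fin 2) 2) = 0 from rfl,
        show ((![0,1,1,1] : Fin 4 → Fin 2) 2) = 1 from rfl, lx0, l0111, div_le_div_iff_of_pos_right hZ]
      exact k0111 hs1 P1
    · -- 1000
      have hy : y = ![1,0,0,0] := by funext j; fin_cases j <;> simpa using ‹_›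
      subst hy
      refine ⟨1, by decide, ?_⟩
      rw [show ((![0,1,0,1] : Fin 4 → Fin 2) 1) = 1 from rfl,
        show ((![1,0,0,0] : Fin 4 → Fin 2) 1) = 0 from rfl, lx1, l1000, le_div_iff₀ hZ]
      linarith [k1000 hs1]
    · -- 1001
      have hy : y = ![1,0,0,1] := by funext j; fin_cases j <;> simpa using ‹_›
      subst hy
      refine ⟨1, by decide, ?_⟩
      rw [show ((![0,1,0,1] : Fin 4 → Fin 2) 1) = 1 from rfl,
        show ((![1,0,0,1] : Fin 4 → Fin 2) 1) = 0 from rfl, lx1, l1001]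
    · -- 1010
      have hy : y = ![1,0,1,0] := by funext j; fin_cases j <;> simpa using ‹_›
      subst hy
      refine ⟨0, by decide, ?_⟩
      rw [show ((![0,1,0,1] : Fin 4 → Fin 2) 0) = 0 from rfl,
        show ((![1,0,1,0] : Fin 4 → Fin 2) 0) = 1 from rfl, lx0, l1010, div_le_div_iff_of_pos_right hZ]
      exact k1010 hs1 P1
    · -- 1011
      have hy : y = ![1,0,1,1] := by funext j; fin_cases j <;> simpa using ‹_›
      subst hy
      refine ⟨2, by decide, ?_⟩
      rw [show ((![0,1,0,1] : Fin 4 → Fin 2) 2) = 0 from rfl,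
        show ((![1,0,1,1] : Fin 4 → Fin 2) 2) = 1 from rfl, lx0, l1011, div_le_div_iff_of_pos_right hZ]
      exact k1011 hs1 P1
    · -- 1100
      have hy : y = ![1,1,0,0] := by funext j; fin_cases j <;> simpa using ‹_›
      subst hy
      refine ⟨3, by decide, ?_⟩
      rw [show ((![0,1,0,1] : Fin 4 → Fin 2) 3) = 1 from rfl,
        show ((![1,1,0,0] : Fin 4 → Fin 2) 3) = 0 from rfl, lx1, l1100]
    · -- 1101
      have hy : y = ![1,1,0,1] := by funext j; fin_cases j <;> simpa using ‹_›
      subst hy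
      refine ⟨0, by decide, ?_⟩
      rw [show ((![0,1,0,1] : Fin 4 → Fin 2) 0) = 0 from rfl,
        show ((![1,1,0,1] : Fin 4 → Fin 2) 0) = 1 from rfl, lx0, l1101]
    · -- 1110
      have hy : y = ![1,1,1,0] := by funext j; fin_cases j <;> simpa using ‹_›
      subst hy
      refine ⟨0, by decide, ?_⟩
      rw [show ((![0,1,0,1] : Fin 4 → Fin 2) 0) = 0 from rfl,
        show ((![1,1,1,0] : Fin 4 → Fin 2) 0) = 1 from rfl, lx0, l1110, div_le_div_iff_of_pos_right hZ]
      exact k1110 hs1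
    · -- 1111
      have hy : y = ![1,1,1,1] := by funext j; fin_cases j <;> simpa using ‹_›
      subst hy
      refine ⟨0, by decide, ?_⟩
      rw [show ((![0,1,0,1] : Fin 4 → Fin 2) 0) = 0 from rfl,
        show ((![1,1,1,1] : Fin 4 → Fin 2) 0) = 1 from rfl, lx0, l1111, div_le_div_iff_of_pos_right hZ]
      exact k1111 hs1
  -- optimum is at most 1
  have hq0 : 0 ≤ q 0 := by
    rw [hq]; show 0 ≤ s/((s - 1)*(s^2 + 1)); apply div_nonneg <;> nlinarith
  have hq1 : 0 ≤ q 1 := by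
    rw [hq]; show 0 ≤ s/(s^2 + 1); apply div_nonneg <;> nlinarith
  have hq2 : 0 ≤ q 2 := by
    rw [hq]; show 0 ≤ (s^2 - s + 1)/(s^2 + 1); apply div_nonneg <;> nlinarith
  have hq3 : 0 ≤ q 3 := by
    rw [hq]; show 0 ≤ 1/(s^2 + 1); apply div_nonneg <;> nlinarith
  have hqnn : ∀ j, 0 ≤ q j := by
    intro j; fin_cases j; exacts [hq0, hq1, hq2, hq3]
  have hmsnn : ∀ z : Fin 4 → Fin 2, 0 ≤ makespan s q f z := by
    intro z
    refine le_max_of_le_left (Finset.sum_nonneg fun j _ => ?_)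
    unfold ptime
    split
    · exact hqnn j
    · exact mul_nonneg (by linarith) (hqnn j)
  have hopt : optMakespan s q f ≤ 1 := by
    have hbdd : BddBelow (Set.range fun z : Fin 4 → Fin 2 => makespan s q f z) :=
      ⟨0, by rintro r ⟨z, rfl⟩; exact hmsnn z⟩
    refine le_trans (ciInf_le hbdd ![1,0,0,1]) ?_
    rw [makespan, l1001, l1001']
    refine max_le le_rfl ?_
    rw [div_le_one hZ]
    linarith [kopt hs1 P1]
  refine ⟨hSE, hmak, hopt, ?_⟩
  rw [hmak]
  have hLnn : 0 ≤ (s^3 - s^2 + 2*s - 1)/(s^3 - s^2 + s - 1) := by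
    apply div_nonneg <;> nlinarith [sq_nonneg s, sq_nonneg (s-1)]
  calc (s^3 - s^2 + 2*s - 1)/(s^3 - s^2 + s - 1) * optMakespan s q f
      ≤ (s^3 - s^2 + 2*s - 1)/(s^3 - s^2 + s - 1) * 1 := mul_le_mul_of_nonneg_left hopt hLnn
    _ = (s^3 - s^2 + 2*s - 1)/(s^3 - s^2 + s - 1) := mul_one _
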